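/- Γ_{1,p} is a normal subgroup of Γ⁰_{1,p}, and the quotient group Γ⁰_{1,p}/Γ_{1,p} is isomorphic to SL(2, F_p), the group of 2×2 matrices of determinant 1 over the field with p elements. -/

import Mathlib

open Matrix

/-- The standard symplectic form `J` on `ℚ⁴`. -/
def J4 : Matrix (Fin 4) (Fin 4) ℚ :=
  !![0,0,1,0; 0,0,0,1; -1,0,0,0; 0,-1,0,0]

/-- Membership in `Sp(4,ℚ)`: `γ J γᵀ = J`. -/
def IsSp4 (γ : Matrix (Fin 4) (Fin 4) ℚ) : Prop := γ * J4 * γ.transpose = J4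

/-- A rational number is an integer. -/
def IsIntegerEntry (x : ℚ) : Prop := ∃ n : ℤ, x = n

/-- Membership in `Γ_{1,p} ⊆ Sp(4,ℤ)`:  `γ - 1` lies in the pattern
`[[ℤ,ℤ,ℤ,pℤ],[pℤ,pℤ,pℤ,p²ℤ],[ℤ,ℤ,ℤ,pℤ],[ℤ,ℤ,ℤ,pℤ]]`. -/
def Gamma1pMem (p : ℕ) (γ : Matrix (Fin 4) (Fin 4) ℚ) : Prop :=
  IsSp4 γ ∧ (∀ i j, IsIntegerEntry (γ i j)) ∧
  (∃ n : ℤ, (γ - 1) 0 3 = p * n) ∧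
  (∃ n : ℤ, (γ - 1) 1 0 = p * n) ∧
  (∃ n : ℤ, (γ - 1) 1 1 = p * n) ∧
  (∃ n : ℤ, (γ - 1) 1 2 = p * n) ∧
  (∃ n : ℤ, (γ - 1) 1 3 = (p : ℚ)^2 * n) ∧
  (∃ n : ℤ, (γ - 1) 2 3 = p * n) ∧
  (∃ n : ℤ, (γ - 1) 3 3 = p * n)

/-- Membership in `Γ⁰_{1,p} ⊆ Sp(4,ℚ)`: entries lie in the pattern
`[[ℤ,ℤ,ℤ,pℤ],[pℤ,ℤ,pℤ,pℤ],[ℤ,ℤ,ℤ,pℤ],[ℤ,(1/p)ℤ,ℤ,ℤ]]`. -/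
def Gamma0pMem (p : ℕ) (γ : Matrix (Fin 4) (Fin 4) ℚ) : Prop :=
  IsSp4 γ ∧ (∀ i j : Fin 4, (i, j) ≠ (3, 1) → IsIntegerEntry (γ i j)) ∧
  (∃ n : ℤ, γ 0 3 = p * n) ∧
  (∃ n : ℤ, γ 1 0 = p * n) ∧
  (∃ n : ℤ, γ 1 2 = p * n) ∧
  (∃ n : ℤ, γ 1 3 = p * n) ∧
  (∃ n : ℤ, γ 2 3 = p * n) ∧
  (∃ n : ℤ, γ 3 1 = (n : ℚ) / p)

namespace Sp4Aux

lemma intEnt_add {x y : ℚ} (hx : IsIntegerEntry x) (hy : IsIntegerEntry y) :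
    IsIntegerEntry (x + y) := by
  obtain ⟨n, rfl⟩ := hx; obtain ⟨m, rfl⟩ := hy; exact ⟨n + m, by push_cast; ring⟩

lemma intEnt_mul {x y : ℚ} (hx : IsIntegerEntry x) (hy : IsIntegerEntry y) :
    IsIntegerEntry (x * y) := by
  obtain ⟨n, rfl⟩ := hx; obtain ⟨m, rfl⟩ := hy; exact ⟨n * m, by push_cast; ring⟩

lemma intEnt_neg {x : ℚ} (hx : IsIntegerEntry x) : IsIntegerEntry (-x) := by
  obtain ⟨n, rfl⟩ := hx; exact ⟨-n, by push_cast; ring⟩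

lemma div_mul_int {p : ℕ} (hp : (p : ℚ) ≠ 0) {x y : ℚ} (hx : ∃ n : ℤ, x = (n : ℚ) / p)
    (hy : ∃ n : ℤ, y = p * n) : IsIntegerEntry (x * y) := by
  obtain ⟨n, rfl⟩ := hx; obtain ⟨m, rfl⟩ := hy; exact ⟨n * m, by push_cast; field_simp⟩

lemma mul_div_int {p : ℕ} (hp : (p : ℚ) ≠ 0) {x y : ℚ} (hx : ∃ n : ℤ, x = p * n)
    (hy : ∃ n : ℤ, y = (n : ℚ) / p) : IsIntegerEntry (x * y) := by
  obtain ⟨n, rfl⟩ := hx; obtain ⟨m, rfl⟩ := hy; exact ⟨n * m, by push_cast; field_simp⟩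

lemma J4_mul_J4 : J4 * J4 = -1 := by
  ext i j
  fin_cases i <;> fin_cases j <;>
    simp [J4, Matrix.mul_apply, Fin.sum_univ_four, Matrix.one_apply, Matrix.vecHead, Matrix.vecTail]

lemma sp4_mul {γ δ : Matrix (Fin 4) (Fin 4) ℚ} (hγ : IsSp4 γ) (hδ : IsSp4 δ) :
    IsSp4 (γ * δ) := by
  unfold IsSp4 at *
  rw [Matrix.transpose_mul, show γ * δ * J4 * (δᵀ * γᵀ) = γ * (δ * J4 * δᵀ) * γᵀ by
    noncomm_ring, hδ, hγ]

lemma sp4_one : IsSp4 1 := by simp [IsSp4]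

/-- The explicit inverse of a symplectic matrix. -/
lemma sp4_inv_explicit (γ : Matrix (Fin 4) (Fin 4) ℚ) :
    -(J4 * γᵀ * J4) =
      !![γ 2 2, γ 3 2, -(γ 0 2), -(γ 1 2);
         γ 2 3, γ 3 3, -(γ 0 3), -(γ 1 3);
         -(γ 2 0), -(γ 3 0), γ 0 0, γ 1 0;
         -(γ 2 1), -(γ 3 1), γ 0 1, γ 1 1] := by
  ext i j
  fin_cases i <;> fin_cases j <;>
    simp [J4, Matrix.mul_apply, Fin.sum_univ_four, Matrix.vecHead, Matrix.vecTail, Matrix.vecMul, dotProduct]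

lemma sp4_mul_inv {γ : Matrix (Fin 4) (Fin 4) ℚ} (hγ : IsSp4 γ) :
    γ * -(J4 * γᵀ * J4) = 1 := by
  have h : γ * -(J4 * γᵀ * J4) = -(γ * J4 * γᵀ * J4) := by noncomm_ring
  rw [h, hγ, J4_mul_J4, neg_neg]

lemma sp4_inv_coe (g : GL (Fin 4) ℚ) (hγ : IsSp4 ↑g) :
    (↑(g⁻¹) : Matrix (Fin 4) (Fin 4) ℚ) = -(J4 * (↑g : Matrix (Fin 4) (Fin 4) ℚ)ᵀ * J4) := by
  rw [Matrix.coe_units_inv]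
  exact Matrix.inv_eq_right_inv (sp4_mul_inv hγ)

lemma sp4_inv {g : GL (Fin 4) ℚ} (hγ : IsSp4 ↑g) : IsSp4 (↑(g⁻¹) : Matrix (Fin 4) (Fin 4) ℚ) := by
  set γ : Matrix (Fin 4) (Fin 4) ℚ := ↑g
  set A : Matrix (Fin 4) (Fin 4) ℚ := ↑(g⁻¹)
  have h1 : A * γ = 1 := g.inv_mul
  unfold IsSp4
  calc A * J4 * Aᵀ = A * (γ * J4 * γᵀ) * Aᵀ := by rw [hγ]
    _ = (A * γ) * J4 * (A * γ)ᵀ := by rw [Matrix.transpose_mul]; noncomm_ring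
    _ = J4 := by rw [h1]; simp

end Sp4Aux
namespace Sp4Aux

variable {p : ℕ}

lemma G0_mul (hp : (p : ℚ) ≠ 0) {γ δ : Matrix (Fin 4) (Fin 4) ℚ}
    (hγ : Gamma0pMem p γ) (hδ : Gamma0pMem p δ) : Gamma0pMem p (γ * δ) := by
  obtain ⟨hγS, hγI, ⟨a03, e03⟩, ⟨a10, e10⟩, ⟨a12, e12⟩, ⟨a13, e13⟩, ⟨a23, e23⟩, ⟨a31, e31⟩⟩ := hγ
  obtain ⟨hδS, hδI, ⟨b03, f03⟩, ⟨b10, f10⟩, ⟨b12, f12⟩, ⟨b13, f13⟩, ⟨b23, f23⟩, ⟨b31, f31⟩⟩ := hδ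
  refine ⟨sp4_mul hγS hδS, ?_, ?_, ?_, ?_, ?_, ?_, ?_⟩
  · intro i j hij
    rw [Matrix.mul_apply, Fin.sum_univ_four]
    fin_cases i <;> fin_cases j <;>
      first
      | exact absurd rfl hij
      | (refine intEnt_add (intEnt_add (intEnt_add ?_ ?_) ?_) ?_ <;>
          first
          | exact intEnt_mul (hγI _ _ (by decide)) (hδI _ _ (by decide))
          | exact div_mul_int hp ⟨_, e31⟩ ⟨_, f10⟩
          | exact div_mul_int hp ⟨_, e31⟩ ⟨_, f12⟩
          | exact div_mul_int hp ⟨_, e31⟩ ⟨_, f13⟩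
          | exact mul_div_int hp ⟨_, e03⟩ ⟨_, f31⟩
          | exact mul_div_int hp ⟨_, e13⟩ ⟨_, f31⟩
          | exact mul_div_int hp ⟨_, e23⟩ ⟨_, f31⟩)
  · obtain ⟨c00, g00⟩ := hγI 0 0 (by decide)
    obtain ⟨c01, g01⟩ := hγI 0 1 (by decide)
    obtain ⟨c02, g02⟩ := hγI 0 2 (by decide)
    obtain ⟨d33, k33⟩ := hδI 3 3 (by decide)
    refine ⟨c00 * b03 + c01 * b13 + c02 * b23 + a03 * d33, ?_⟩
    rw [Matrix.mul_apply, Fin.sum_univ_four, g00, g01, g02, f03, f13, f23, e03, k33]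
    push_cast; ring
  · obtain ⟨d00, k00⟩ := hδI 0 0 (by decide)
    obtain ⟨d10, k10⟩ := hδI 1 0 (by decide)
    obtain ⟨d20, k20⟩ := hδI 2 0 (by decide)
    obtain ⟨d30, k30⟩ := hδI 3 0 (by decide)
    obtain ⟨c11, g11⟩ := hγI 1 1 (by decide)
    refine ⟨a10 * d00 + c11 * b10 + a12 * d20 + a13 * d30, ?_⟩
    rw [Matrix.mul_apply, Fin.sum_univ_four, e10, g11, e12, e13, k00, f10, k20, k30]
    push_cast; ring
  · obtain ⟨d02, k02⟩ := hδI 0 2 (by decide)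
    obtain ⟨d22, k22⟩ := hδI 2 2 (by decide)
    obtain ⟨d32, k32⟩ := hδI 3 2 (by decide)
    obtain ⟨c11, g11⟩ := hγI 1 1 (by decide)
    refine ⟨a10 * d02 + c11 * b12 + a12 * d22 + a13 * d32, ?_⟩
    rw [Matrix.mul_apply, Fin.sum_univ_four, e10, g11, e12, e13, k02, f12, k22, k32]
    push_cast; ring
  · obtain ⟨d33, k33⟩ := hδI 3 3 (by decide)
    obtain ⟨c11, g11⟩ := hγI 1 1 (by decide)
    refine ⟨(p:ℤ) * (a10 * b03 + a12 * b23) + c11 * b13 + a13 * d33, ?_⟩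
    rw [Matrix.mul_apply, Fin.sum_univ_four, e10, g11, e12, e13, f03, f13, f23, k33]
    push_cast; ring
  · obtain ⟨c20, g20⟩ := hγI 2 0 (by decide)
    obtain ⟨c21, g21⟩ := hγI 2 1 (by decide)
    obtain ⟨c22, g22⟩ := hγI 2 2 (by decide)
    obtain ⟨d33, k33⟩ := hδI 3 3 (by decide)
    refine ⟨c20 * b03 + c21 * b13 + c22 * b23 + a23 * d33, ?_⟩
    rw [Matrix.mul_apply, Fin.sum_univ_four, g20, g21, g22, f03, f13, f23, e23, k33]
    push_cast; ring
  · obtain ⟨c30, g30⟩ := hγI 3 0 (by decide)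
    obtain ⟨c32, g32⟩ := hγI 3 2 (by decide)
    obtain ⟨c33, g33⟩ := hγI 3 3 (by decide)
    obtain ⟨d01, k01⟩ := hδI 0 1 (by decide)
    obtain ⟨d11, k11⟩ := hδI 1 1 (by decide)
    obtain ⟨d21, k21⟩ := hδI 2 1 (by decide)
    refine ⟨(p : ℤ) * (c30 * d01 + c32 * d21) + a31 * d11 + c33 * b31, ?_⟩
    rw [Matrix.mul_apply, Fin.sum_univ_four, g30, g32, g33, k01, k11, k21, e31, f31]
    field_simp; push_cast; ring

lemma G0_one : Gamma0pMem p 1 := by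
  refine ⟨sp4_one, ?_, ⟨0, ?_⟩, ⟨0, ?_⟩, ⟨0, ?_⟩, ⟨0, ?_⟩, ⟨0, ?_⟩, ⟨0, ?_⟩⟩
  · intro i j _
    by_cases h : i = j
    · exact ⟨1, by simp [h, Matrix.one_apply]⟩
    · exact ⟨0, by simp [Matrix.one_apply, h]⟩
  all_goals simp [Matrix.one_apply]

lemma G0_inv (hp : (p : ℚ) ≠ 0) {g : GL (Fin 4) ℚ} (hγ : Gamma0pMem p ↑g) :
    Gamma0pMem p (↑(g⁻¹) : Matrix (Fin 4) (Fin 4) ℚ) := by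
  obtain ⟨hγS, hγI, ⟨a03, e03⟩, ⟨a10, e10⟩, ⟨a12, e12⟩, ⟨a13, e13⟩, ⟨a23, e23⟩, ⟨a31, e31⟩⟩ := hγ
  have hform : (↑(g⁻¹) : Matrix (Fin 4) (Fin 4) ℚ) =
      !![(↑g : Matrix (Fin 4) (Fin 4) ℚ) 2 2, (↑g : Matrix (Fin 4) (Fin 4) ℚ) 3 2,
          -((↑g : Matrix (Fin 4) (Fin 4) ℚ) 0 2), -((↑g : Matrix (Fin 4) (Fin 4) ℚ) 1 2);
         (↑g : Matrix (Fin 4) (Fin 4) ℚ) 2 3, (↑g : Matrix (Fin 4) (Fin 4) ℚ) 3 3,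
          -((↑g : Matrix (Fin 4) (Fin 4) ℚ) 0 3), -((↑g : Matrix (Fin 4) (Fin 4) ℚ) 1 3);
         -((↑g : Matrix (Fin 4) (Fin 4) ℚ) 2 0), -((↑g : Matrix (Fin 4) (Fin 4) ℚ) 3 0),
          (↑g : Matrix (Fin 4) (Fin 4) ℚ) 0 0, (↑g : Matrix (Fin 4) (Fin 4) ℚ) 1 0;
         -((↑g : Matrix (Fin 4) (Fin 4) ℚ) 2 1), -((↑g : Matrix (Fin 4) (Fin 4) ℚ) 3 1),
          (↑g : Matrix (Fin 4) (Fin 4) ℚ) 0 1, (↑g : Matrix (Fin 4) (Fin 4) ℚ) 1 1] := by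
    rw [sp4_inv_coe g hγS, sp4_inv_explicit]
  refine ⟨sp4_inv hγS, ?_, ?_, ?_, ?_, ?_, ?_, ?_⟩
  · intro i j hij
    rw [hform]
    fin_cases i <;> fin_cases j <;>
      first
      | exact absurd rfl hij
      | (show IsIntegerEntry _
         simp only [Matrix.cons_val', Matrix.cons_val_zero, Matrix.cons_val_one,
           Matrix.head_cons, Matrix.empty_val', Matrix.cons_val_fin_one, Matrix.head_fin_const,
           Matrix.of_apply, Matrix.cons_val_two, Matrix.cons_val_three, Matrix.tail_cons]
         first
         | exact hγI _ _ (by decide)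
         | exact intEnt_neg (hγI _ _ (by decide)))
  · exact ⟨-a12, by rw [hform]; simp [e12]; try push_cast; try ring⟩
  · exact ⟨a23, by rw [hform]; simp [e23]⟩
  · exact ⟨-a03, by rw [hform]; simp [e03]; try push_cast; try ring⟩
  · exact ⟨-a13, by rw [hform]; simp [e13]; try push_cast; try ring⟩
  · exact ⟨a10, by rw [hform]; simp [e10]⟩
  · exact ⟨-a31, by rw [hform]; simp [e31]; try push_cast; try ring⟩

def G0grp (p : ℕ) (hp : (p : ℚ) ≠ 0) : Subgroup (GL (Fin 4) ℚ) where
  carrier := {g | Gamma0pMem p ↑g}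
  mul_mem' ha hb := G0_mul hp ha hb
  one_mem' := G0_one
  inv_mem' ha := G0_inv hp ha

lemma G0grp_mem (hp : (p : ℚ) ≠ 0) (g : GL (Fin 4) ℚ) :
    g ∈ G0grp p hp ↔ Gamma0pMem p ↑g := Iff.rfl

end Sp4Aux
namespace Sp4Aux

/-- Reduce an (integer) rational to `ZMod p` via its numerator. -/
def qmap (p : ℕ) (x : ℚ) : ZMod p := (x.num : ZMod p)

lemma qmap_intCast (p : ℕ) (n : ℤ) : qmap p ((n : ℚ)) = (n : ZMod p) := by
  simp [qmap]

/-- The 2×2 reduction of a `Γ⁰`-matrix. -/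
def fmat (p : ℕ) (γ : Matrix (Fin 4) (Fin 4) ℚ) : Matrix (Fin 2) (Fin 2) (ZMod p) :=
  !![qmap p (γ 1 1), qmap p (γ 1 3 / p); qmap p (p * γ 3 1), qmap p (γ 3 3)]

variable {p : ℕ}

lemma fmat_entries (hp : (p : ℚ) ≠ 0) {γ : Matrix (Fin 4) (Fin 4) ℚ}
    {c11 a13 a31 c33 : ℤ} (g11 : γ 1 1 = (c11 : ℚ)) (e13 : γ 1 3 = (p : ℚ) * a13)
    (e31 : γ 3 1 = (a31 : ℚ) / p) (g33 : γ 3 3 = (c33 : ℚ)) :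
    fmat p γ = !![(c11 : ZMod p), (a13 : ZMod p); (a31 : ZMod p), (c33 : ZMod p)] := by
  have h1 : γ 1 3 / p = ((a13 : ℤ) : ℚ) := by rw [e13]; field_simp
  have h2 : (p : ℚ) * γ 3 1 = ((a31 : ℤ) : ℚ) := by rw [e31]; field_simp
  rw [fmat, g11, h1, h2, g33, qmap_intCast, qmap_intCast, qmap_intCast, qmap_intCast]

lemma fmat_det (hp : (p : ℚ) ≠ 0) {γ : Matrix (Fin 4) (Fin 4) ℚ} (hγ : Gamma0pMem p γ) :
    (fmat p γ).det = 1 := by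
  obtain ⟨hγS, hγI, ⟨a03, e03⟩, ⟨a10, e10⟩, ⟨a12, e12⟩, ⟨a13, e13⟩, ⟨a23, e23⟩, ⟨a31, e31⟩⟩ := hγ
  obtain ⟨c11, g11⟩ := hγI 1 1 (by decide)
  obtain ⟨c33, g33⟩ := hγI 3 3 (by decide)
  obtain ⟨c30, g30⟩ := hγI 3 0 (by decide)
  obtain ⟨c32, g32⟩ := hγI 3 2 (by decide)
  have h13 : (γ * J4 * γᵀ) 1 3 = J4 1 3 := by rw [hγS]
  simp only [J4, Matrix.mul_apply, Fin.sum_univ_four, Matrix.transpose_apply] at h13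
  norm_num [Matrix.vecHead, Matrix.vecTail, Matrix.cons_val_two, Matrix.cons_val_three, Matrix.cons_val_one, Matrix.cons_val_zero] at h13
  rw [e10, e12, e13, e31, g11, g33, g30, g32] at h13
  have key : c11 * c33 - a13 * a31 = 1 - (p : ℤ) * (a10 * c32 - a12 * c30) := by
    have hq : ((c11 * c33 - a13 * a31 : ℤ) : ℚ) =
        ((1 - (p : ℤ) * (a10 * c32 - a12 * c30) : ℤ) : ℚ) := by
      push_cast
      field_simp at h13
      refine mul_left_cancel₀ hp ?_
      linear_combination (p : ℚ) * h13
    exact_mod_cast hq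
  rw [fmat_entries hp g11 e13 e31 g33, Matrix.det_fin_two_of]
  have := congrArg (fun n : ℤ => (n : ZMod p)) key
  push_cast at this
  simpa using this

end Sp4Aux
namespace Sp4Aux

variable {p : ℕ}

lemma fmat_mul (hp : (p : ℚ) ≠ 0) {γ δ : Matrix (Fin 4) (Fin 4) ℚ}
    (hγ : Gamma0pMem p γ) (hδ : Gamma0pMem p δ) :
    fmat p (γ * δ) = fmat p γ * fmat p δ := by
  obtain ⟨hγS, hγI, ⟨a03, e03⟩, ⟨a10, e10⟩, ⟨a12, e12⟩, ⟨a13, e13⟩, ⟨a23, e23⟩, ⟨a31, e31⟩⟩ := hγ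
  obtain ⟨hδS, hδI, ⟨b03, f03⟩, ⟨b10, f10⟩, ⟨b12, f12⟩, ⟨b13, f13⟩, ⟨b23, f23⟩, ⟨b31, f31⟩⟩ := hδ
  obtain ⟨c11, g11⟩ := hγI 1 1 (by decide)
  obtain ⟨c33, g33⟩ := hγI 3 3 (by decide)
  obtain ⟨c30, g30⟩ := hγI 3 0 (by decide)
  obtain ⟨c32, g32⟩ := hγI 3 2 (by decide)
  obtain ⟨d11, k11⟩ := hδI 1 1 (by decide)
  obtain ⟨d33, k33⟩ := hδI 3 3 (by decide)
  obtain ⟨d01, k01⟩ := hδI 0 1 (by decide)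
  obtain ⟨d21, k21⟩ := hδI 2 1 (by decide)
  have E11 : (γ * δ) 1 1 = (((p : ℤ) * (a10 * d01 + a12 * d21) + c11 * d11 + a13 * b31 : ℤ) : ℚ) := by
    rw [Matrix.mul_apply, Fin.sum_univ_four, e10, g11, e12, e13, k01, k11, k21, f31]
    push_cast; field_simp; ring
  have E13 : (γ * δ) 1 3 = (p : ℚ) * (((p : ℤ) * (a10 * b03 + a12 * b23) + c11 * b13 + a13 * d33 : ℤ) : ℚ) := by
    rw [Matrix.mul_apply, Fin.sum_univ_four, e10, g11, e12, e13, f03, f13, f23, k33]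
    push_cast; ring
  have E31 : (γ * δ) 3 1 = ((((p : ℤ) * (c30 * d01 + c32 * d21) + a31 * d11 + c33 * b31 : ℤ) : ℚ)) / p := by
    rw [Matrix.mul_apply, Fin.sum_univ_four, g30, e31, g32, g33, k01, k11, k21, f31]
    push_cast; field_simp; ring
  have E33 : (γ * δ) 3 3 = (((p : ℤ) * (c30 * b03 + c32 * b23) + a31 * b13 + c33 * d33 : ℤ) : ℚ) := by
    rw [Matrix.mul_apply, Fin.sum_univ_four, g30, e31, g32, g33, f03, f13, f23, k33]
    push_cast; field_simp; ring
  rw [fmat_entries hp E11 E13 E31 E33, fmat_entries hp g11 e13 e31 g33,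
    fmat_entries hp k11 f13 f31 k33]
  ext i j
  fin_cases i <;> fin_cases j <;>
    · simp [Matrix.mul_apply, Fin.sum_univ_two, Matrix.vecHead, Matrix.vecTail,
        ZMod.natCast_self]
      try push_cast [ZMod.natCast_self]
      try ring

lemma fmat_one (hp : (p : ℚ) ≠ 0) : fmat p (1 : Matrix (Fin 4) (Fin 4) ℚ) = 1 := by
  have g11 : (1 : Matrix (Fin 4) (Fin 4) ℚ) 1 1 = ((1 : ℤ) : ℚ) := by simp [Matrix.one_apply]
  have e13 : (1 : Matrix (Fin 4) (Fin 4) ℚ) 1 3 = (p : ℚ) * ((0 : ℤ) : ℚ) := by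
    simp [Matrix.one_apply]
  have e31 : (1 : Matrix (Fin 4) (Fin 4) ℚ) 3 1 = ((0 : ℤ) : ℚ) / p := by
    simp [Matrix.one_apply]
  have g33 : (1 : Matrix (Fin 4) (Fin 4) ℚ) 3 3 = ((1 : ℤ) : ℚ) := by simp [Matrix.one_apply]
  rw [fmat_entries hp g11 e13 e31 g33]
  ext i j
  fin_cases i <;> fin_cases j <;>
    simp [Matrix.one_apply, Matrix.vecHead, Matrix.vecTail]

/-- The reduction homomorphism from `Γ⁰_{1,p}` to `SL(2, ZMod p)`. -/
def redHom (p : ℕ) (hp : (p : ℚ) ≠ 0) :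
    (G0grp p hp) →* Matrix.SpecialLinearGroup (Fin 2) (ZMod p) where
  toFun g := ⟨fmat p ((g : GL (Fin 4) ℚ) : Matrix (Fin 4) (Fin 4) ℚ), fmat_det hp g.2⟩
  map_one' := Subtype.ext (by simpa using fmat_one hp)
  map_mul' a b := Subtype.ext (by
    show fmat p ((↑(↑(a * b) : GL (Fin 4) ℚ)) : Matrix (Fin 4) (Fin 4) ℚ) = _
    have : ((↑(↑(a * b) : GL (Fin 4) ℚ)) : Matrix (Fin 4) (Fin 4) ℚ)
        = ((↑(↑a : GL (Fin 4) ℚ)) : Matrix (Fin 4) (Fin 4) ℚ)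
          * ((↑(↑b : GL (Fin 4) ℚ)) : Matrix (Fin 4) (Fin 4) ℚ) := rfl
    rw [this, fmat_mul hp a.2 b.2]
    rfl)

end Sp4Aux
namespace Sp4Aux

variable {p : ℕ}

lemma G1_to_G0 (hp : (p : ℚ) ≠ 0) {γ : Matrix (Fin 4) (Fin 4) ℚ} (h : Gamma1pMem p γ) :
    Gamma0pMem p γ := by
  obtain ⟨hS, hI, ⟨n03, e03⟩, ⟨n10, e10⟩, ⟨n11, e11⟩, ⟨n12, e12⟩, ⟨n13, e13⟩, ⟨n23, e23⟩,
    ⟨n33, e33⟩⟩ := h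
  rw [Matrix.sub_apply, Matrix.one_apply_ne (by decide)] at e03 e10 e12 e13 e23
  obtain ⟨m31, hm31⟩ := hI 3 1
  refine ⟨hS, fun i j _ => hI i j, ⟨n03, by linarith⟩, ⟨n10, by linarith⟩, ⟨n12, by linarith⟩,
    ⟨(p : ℤ) * n13, by push_cast; nlinarith⟩, ⟨n23, by linarith⟩,
    ⟨(p : ℤ) * m31, by rw [hm31]; push_cast; field_simp⟩⟩

lemma fmat_of_G1 (hp : (p : ℚ) ≠ 0) {γ : Matrix (Fin 4) (Fin 4) ℚ} (h : Gamma1pMem p γ) :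
    fmat p γ = 1 := by
  obtain ⟨hS, hI, ⟨n03, e03⟩, ⟨n10, e10⟩, ⟨n11, e11⟩, ⟨n12, e12⟩, ⟨n13, e13⟩, ⟨n23, e23⟩,
    ⟨n33, e33⟩⟩ := h
  rw [Matrix.sub_apply, Matrix.one_apply_ne (by decide)] at e13
  rw [Matrix.sub_apply, Matrix.one_apply_eq] at e11 e33
  obtain ⟨m31, hm31⟩ := hI 3 1
  have g11 : γ 1 1 = ((1 + (p : ℤ) * n11 : ℤ) : ℚ) := by push_cast; linarith
  have g33 : γ 3 3 = ((1 + (p : ℤ) * n33 : ℤ) : ℚ) := by push_cast; linarith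
  have e13' : γ 1 3 = (p : ℚ) * (((p : ℤ) * n13 : ℤ) : ℚ) := by push_cast; nlinarith
  have e31' : γ 3 1 = (((p : ℤ) * m31 : ℤ) : ℚ) / p := by rw [hm31]; push_cast; field_simp
  rw [fmat_entries hp g11 e13' e31' g33]
  ext i j
  fin_cases i <;> fin_cases j <;>
    simp [Matrix.one_apply, Matrix.vecHead, Matrix.vecTail, ZMod.natCast_self]

lemma G1_of_ker (hp : (p : ℚ) ≠ 0) {γ : Matrix (Fin 4) (Fin 4) ℚ} (hγ : Gamma0pMem p γ)
    (h : fmat p γ = 1) : Gamma1pMem p γ := by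
  obtain ⟨hS, hI, ⟨a03, e03⟩, ⟨a10, e10⟩, ⟨a12, e12⟩, ⟨a13, e13⟩, ⟨a23, e23⟩, ⟨a31, e31⟩⟩ := hγ
  obtain ⟨c11, g11⟩ := hI 1 1 (by decide)
  obtain ⟨c33, g33⟩ := hI 3 3 (by decide)
  rw [fmat_entries hp g11 e13 e31 g33] at h
  have h00 : ((c11 : ZMod p)) = 1 := by
    have := congrArg (fun M : Matrix (Fin 2) (Fin 2) (ZMod p) => M 0 0) h; simpa using this
  have h01 : ((a13 : ZMod p)) = 0 := by
    have := congrArg (fun M : Matrix (Fin 2) (Fin 2) (ZMod p) => M 0 1) h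
    simpa [Matrix.one_apply] using this
  have h10 : ((a31 : ZMod p)) = 0 := by
    have := congrArg (fun M : Matrix (Fin 2) (Fin 2) (ZMod p) => M 1 0) h
    simpa [Matrix.one_apply] using this
  have h11 : ((c33 : ZMod p)) = 1 := by
    have := congrArg (fun M : Matrix (Fin 2) (Fin 2) (ZMod p) => M 1 1) h; simpa using this
  obtain ⟨k11, hk11⟩ : (p : ℤ) ∣ c11 - 1 := by
    rw [← ZMod.intCast_zmod_eq_zero_iff_dvd]; push_cast; rw [h00]; ring
  obtain ⟨k33, hk33⟩ : (p : ℤ) ∣ c33 - 1 := by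
    rw [← ZMod.intCast_zmod_eq_zero_iff_dvd]; push_cast; rw [h11]; ring
  obtain ⟨k13, hk13⟩ : (p : ℤ) ∣ a13 := by
    rw [← ZMod.intCast_zmod_eq_zero_iff_dvd]; push_cast; rw [h01]
  obtain ⟨k31, hk31⟩ : (p : ℤ) ∣ a31 := by
    rw [← ZMod.intCast_zmod_eq_zero_iff_dvd]; push_cast; rw [h10]
  refine ⟨hS, ?_, ⟨a03, ?_⟩, ⟨a10, ?_⟩, ⟨k11, ?_⟩, ⟨a12, ?_⟩, ⟨k13, ?_⟩, ⟨a23, ?_⟩, ⟨k33, ?_⟩⟩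
  · intro i j
    by_cases hij : (i, j) = (3, 1)
    · rw [Prod.mk.injEq] at hij
      obtain ⟨rfl, rfl⟩ := hij
      exact ⟨k31, by rw [e31, hk31]; push_cast; field_simp⟩
    · exact hI i j hij
  · rw [Matrix.sub_apply, Matrix.one_apply_ne (by decide), e03]; ring
  · rw [Matrix.sub_apply, Matrix.one_apply_ne (by decide), e10]; ring
  · rw [Matrix.sub_apply, Matrix.one_apply_eq, g11]
    exact_mod_cast congrArg (fun n : ℤ => (n : ℚ)) hk11
  · rw [Matrix.sub_apply, Matrix.one_apply_ne (by decide), e12]; ring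
  · rw [Matrix.sub_apply, Matrix.one_apply_ne (by decide), e13, hk13]; push_cast; ring
  · rw [Matrix.sub_apply, Matrix.one_apply_ne (by decide), e23]; ring
  · rw [Matrix.sub_apply, Matrix.one_apply_eq, g33]
    exact_mod_cast congrArg (fun n : ℤ => (n : ℚ)) hk33

end Sp4Aux
namespace Sp4Aux

variable {p : ℕ}

/-- Embedding of an integral `SL₂` tuple into `Γ⁰_{1,p}`. -/
def embMat (p : ℕ) (a b c d : ℤ) : Matrix (Fin 4) (Fin 4) ℚ :=
  !![1, 0, 0, 0;
     0, (a : ℚ), 0, (p : ℚ) * b;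
     0, 0, 1, 0;
     0, (c : ℚ) / p, 0, (d : ℚ)]

lemma embMat_mul_inv (hp : (p : ℚ) ≠ 0) {a b c d : ℤ} (h : a * d - b * c = 1) :
    embMat p a b c d * embMat p d (-b) (-c) a = 1 := by
  have h' : (a : ℚ) * d - b * c = 1 := by exact_mod_cast congrArg (fun n : ℤ => (n : ℚ)) h
  ext i j
  fin_cases i <;> fin_cases j <;>
    · simp [embMat, Matrix.mul_apply, Fin.sum_univ_four, Matrix.one_apply,
        Matrix.vecHead, Matrix.vecTail]
      try field_simp
      try ring
      try linear_combination h'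
      try linear_combination (p : ℚ) * h'
      try linear_combination -(p : ℚ) * h'

lemma embMat_sp4 (hp : (p : ℚ) ≠ 0) {a b c d : ℤ} (h : a * d - b * c = 1) :
    IsSp4 (embMat p a b c d) := by
  have h' : (a : ℚ) * d - b * c = 1 := by exact_mod_cast congrArg (fun n : ℤ => (n : ℚ)) h
  unfold IsSp4
  ext i j
  fin_cases i <;> fin_cases j <;>
    · simp [embMat, J4, Matrix.mul_apply, Fin.sum_univ_four,
        Matrix.vecHead, Matrix.vecTail]
      try field_simp
      try ring
      try linear_combination h'
      try linear_combination (p : ℚ) * h'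
      try linear_combination -(p : ℚ) * h'
      try linear_combination -h'

/-- The embedded matrix as an element of `GL(4, ℚ)`. -/
def embGL (p : ℕ) (hp : (p : ℚ) ≠ 0) (a b c d : ℤ) (h : a * d - b * c = 1) :
    GL (Fin 4) ℚ :=
  ⟨embMat p a b c d, embMat p d (-b) (-c) a,
    embMat_mul_inv hp h,
    by
      have h2 : d * a - (-b) * (-c) = 1 := by linarith
      have := embMat_mul_inv hp h2
      simpa using this⟩

lemma embGL_mem (hp : (p : ℚ) ≠ 0) {a b c d : ℤ} (h : a * d - b * c = 1) :
    Gamma0pMem p (↑(embGL p hp a b c d h) : Matrix (Fin 4) (Fin 4) ℚ) := by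
  show Gamma0pMem p (embMat p a b c d)
  refine ⟨embMat_sp4 hp h, ?_, ⟨0, by simp [embMat]⟩, ⟨0, by simp [embMat]⟩,
    ⟨0, by simp [embMat]⟩, ⟨b, by simp [embMat]⟩, ⟨0, by simp [embMat]⟩,
    ⟨c, by simp [embMat]⟩⟩
  intro i j hij
  fin_cases i <;> fin_cases j <;>
    first
    | exact absurd rfl hij
    | (refine ⟨0, ?_⟩; simp [embMat, Matrix.vecHead, Matrix.vecTail]; done)
    | (refine ⟨1, ?_⟩; simp [embMat, Matrix.vecHead, Matrix.vecTail]; done)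
    | (refine ⟨a, ?_⟩; simp [embMat, Matrix.vecHead, Matrix.vecTail]; done)
    | (refine ⟨d, ?_⟩; simp [embMat, Matrix.vecHead, Matrix.vecTail]; done)
    | (refine ⟨(p : ℤ) * b, ?_⟩; simp [embMat, Matrix.vecHead, Matrix.vecTail]; try push_cast; try ring; done)

lemma fmat_embGL (hp : (p : ℚ) ≠ 0) {a b c d : ℤ} (h : a * d - b * c = 1) :
    fmat p (↑(embGL p hp a b c d h) : Matrix (Fin 4) (Fin 4) ℚ) =
      !![(a : ZMod p), (b : ZMod p); (c : ZMod p), (d : ZMod p)] := by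
  show fmat p (embMat p a b c d) = _
  have g11 : embMat p a b c d 1 1 = ((a : ℤ) : ℚ) := by simp [embMat]
  have e13 : embMat p a b c d 1 3 = (p : ℚ) * ((b : ℤ) : ℚ) := by simp [embMat]
  have e31 : embMat p a b c d 3 1 = ((c : ℤ) : ℚ) / p := by simp [embMat]
  have g33 : embMat p a b c d 3 3 = ((d : ℤ) : ℚ) := by simp [embMat]
  rw [fmat_entries hp g11 e13 e31 g33]

end Sp4Aux
namespace Sp4Aux

variable {p : ℕ}

/-- Upper elementary matrix in `SL(2, ZMod p)`. -/
def TT (p : ℕ) (x : ZMod p) : Matrix.SpecialLinearGroup (Fin 2) (ZMod p) :=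
  ⟨!![1, x; 0, 1], by simp [Matrix.det_fin_two_of]⟩

/-- Lower elementary matrix in `SL(2, ZMod p)`. -/
def LL (p : ℕ) (x : ZMod p) : Matrix.SpecialLinearGroup (Fin 2) (ZMod p) :=
  ⟨!![1, 0; x, 1], by simp [Matrix.det_fin_two_of]⟩

lemma SL2_det {M : Matrix.SpecialLinearGroup (Fin 2) (ZMod p)} :
    M.1 0 0 * M.1 1 1 - M.1 0 1 * M.1 1 0 = 1 := by
  have := M.2
  rwa [Matrix.det_fin_two] at this

lemma SL2_decomp [Fact p.Prime] (M : Matrix.SpecialLinearGroup (Fin 2) (ZMod p))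
    (hc : M.1 1 0 ≠ 0) :
    M = TT p ((M.1 0 0 - 1) / M.1 1 0) * LL p (M.1 1 0) * TT p ((M.1 1 1 - 1) / M.1 1 0) := by
  have hdet := SL2_det (M := M)
  apply Subtype.ext
  ext i j
  rw [Matrix.SpecialLinearGroup.coe_mul, Matrix.SpecialLinearGroup.coe_mul]
  simp only [Matrix.SpecialLinearGroup.coe_mul, TT, LL]
  fin_cases i <;> fin_cases j <;>
    · simp [Matrix.mul_apply, Fin.sum_univ_two, Matrix.vecHead, Matrix.vecTail]
      try field_simp
      try ring
      try linear_combination hdet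
      try linear_combination M.1 1 0 * hdet
      try linear_combination - hdet
      try linear_combination - (M.1 1 0 * hdet)

lemma SL2_gen [Fact p.Prime] {H : Subgroup (Matrix.SpecialLinearGroup (Fin 2) (ZMod p))}
    (hT : ∀ x : ZMod p, TT p x ∈ H) (hL : ∀ x : ZMod p, LL p x ∈ H)
    (M : Matrix.SpecialLinearGroup (Fin 2) (ZMod p)) : M ∈ H := by
  have key : ∀ N : Matrix.SpecialLinearGroup (Fin 2) (ZMod p), N.1 1 0 ≠ 0 → N ∈ H := by
    intro N hc
    rw [SL2_decomp N hc]
    exact H.mul_mem (H.mul_mem (hT _) (hL _)) (hT _)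
  by_cases hc : M.1 1 0 ≠ 0
  · exact key M hc
  · push_neg at hc
    have hdet := SL2_det (M := M)
    have hd : M.1 1 1 ≠ 0 := by
      intro h0
      rw [hc, h0] at hdet
      simp at hdet
    have hN : ((M * LL p 1).1) 1 0 ≠ 0 := by
      have : ((M * LL p 1).1) 1 0 = M.1 1 1 := by
        rw [Matrix.SpecialLinearGroup.coe_mul]
        simp [Matrix.SpecialLinearGroup.coe_mul, LL, Matrix.mul_apply, Fin.sum_univ_two,
          Matrix.vecHead, Matrix.vecTail, hc]
      rwa [this]
    have : M = (M * LL p 1) * (LL p 1)⁻¹ := by group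
    rw [this]
    exact H.mul_mem (key _ hN) (H.inv_mem (hL 1))

lemma val_int_cast (x : ZMod p) [NeZero p] : ((x.val : ℤ) : ZMod p) = x := by
  push_cast
  simp [ZMod.natCast_val, ZMod.cast_id]

lemma redHom_surj [Fact p.Prime] (hp : (p : ℚ) ≠ 0) :
    Function.Surjective (redHom p hp) := by
  intro M
  have hr : M ∈ (redHom p hp).range := by
    refine SL2_gen ?_ ?_ M
    · intro x
      refine ⟨⟨embGL p hp 1 (x.val : ℤ) 0 1 (by ring), embGL_mem hp (by ring)⟩, ?_⟩
      apply Subtype.ext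
      show fmat p _ = _
      rw [fmat_embGL hp (by ring)]
      show _ = (!![1, x; 0, 1] : Matrix (Fin 2) (Fin 2) (ZMod p))
      rw [val_int_cast]
      norm_num
    · intro x
      refine ⟨⟨embGL p hp 1 0 (x.val : ℤ) 1 (by ring), embGL_mem hp (by ring)⟩, ?_⟩
      apply Subtype.ext
      show fmat p _ = _
      rw [fmat_embGL hp (by ring)]
      show _ = (!![1, 0; x, 1] : Matrix (Fin 2) (Fin 2) (ZMod p))
      rw [val_int_cast]
      norm_num
  exact hr

end Sp4Aux

open Sp4Aux in
/-- `Γ_{1,p}` is a normal subgroup of `Γ⁰_{1,p}` with quotient isomorphic to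
`SL(2, F_p)`. -/
theorem statement1 (p : ℕ) (hp : p.Prime) (hodd : Odd p) :
    ∃ G0 Γ : Subgroup (GL (Fin 4) ℚ),
      (∀ g : GL (Fin 4) ℚ, g ∈ G0 ↔ Gamma0pMem p ↑g) ∧
      (∀ g : GL (Fin 4) ℚ, g ∈ Γ ↔ Gamma1pMem p ↑g) ∧
      Γ ≤ G0 ∧ (Γ.subgroupOf G0).Normal ∧
      ∃ f : G0 →* Matrix.SpecialLinearGroup (Fin 2) (ZMod p),
        Function.Surjective f ∧ f.ker = Γ.subgroupOf G0 := by
  haveI : Fact p.Prime := ⟨hp⟩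
  have hp0 : (p : ℚ) ≠ 0 := Nat.cast_ne_zero.mpr hp.ne_zero
  refine ⟨G0grp p hp0, Subgroup.map (G0grp p hp0).subtype (redHom p hp0).ker,
    fun g => Iff.rfl, ?_, ?_, ?_, redHom p hp0, redHom_surj hp0, ?_⟩
  case _ =>
    intro g
    constructor
    · rintro ⟨x, hx, rfl⟩
      have h1 : fmat p ((x : GL (Fin 4) ℚ) : Matrix (Fin 4) (Fin 4) ℚ) = 1 := by
        have h2 := MonoidHom.mem_ker.mp hx
        have h3 := congrArg Subtype.val h2
        exact h3
      exact G1_of_ker hp0 x.2 h1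
    · intro h1
      refine ⟨⟨g, G1_to_G0 hp0 h1⟩, ?_, rfl⟩
      show redHom p hp0 _ = 1
      apply Subtype.ext
      show fmat p _ = _
      rw [fmat_of_G1 hp0 h1]
      rfl
  case _ => exact Subgroup.map_subtype_le _
  case _ =>
    have hker : (Subgroup.map (G0grp p hp0).subtype (redHom p hp0).ker).subgroupOf (G0grp p hp0)
        = (redHom p hp0).ker :=
      Subgroup.comap_map_eq_self_of_injective (Subgroup.subtype_injective _) _
    rw [hker]
    exact (redHom p hp0).normal_ker
  case _ =>
    exact (Subgroup.comap_map_eq_self_of_injective (Subgroup.subtype_injective _) _).symm
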